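/- arXiv:1712.03281 — 3 statements merged into one kernel-verified Lean document; each statement's English description precedes it below -/
import Mathlib

section
/- Sparse vector version of the tight hard-thresholding bound: let θ ∈ ℝ^n, let θ* ∈ ℝ^n be supported on at most r* coordinates, and let θ' be obtained from θ by keeping its r largest-magnitude entries (r > r*) and zeroing the rest. Then ‖θ' − θ*‖₂² ≤ (1 + 2√(r*)/√(r − r*)) ‖θ − θ*‖₂². -/
private lemma ht_aux (t b m rrs E F : ℝ) (ht : 0 ≤ t) (htrs : t ≤ rrs)
    (hm : 1 ≤ m) (hb : t + m ≤ b) (hE : 0 ≤ E) (hF : 0 ≤ F) :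
    t * (E / b) + 2 * Real.sqrt (E / b) * (Real.sqrt t * Real.sqrt F) ≤
      2 * Real.sqrt rrs / Real.sqrt m * (E + F) := by
  set u := Real.sqrt t with hu
  set v := Real.sqrt b with hv
  set w := Real.sqrt m with hw
  set p := Real.sqrt E with hp
  set q := Real.sqrt F with hq
  set s := Real.sqrt rrs with hs
  have hb0 : (0:ℝ) < b := by linarith
  have hm0 : (0:ℝ) < m := by linarith
  have hu0 : 0 ≤ u := Real.sqrt_nonneg _
  have hv0 : 0 < v := Real.sqrt_pos.2 hb0
  have hw0 : 0 < w := Real.sqrt_pos.2 hm0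
  have hp0 : 0 ≤ p := Real.sqrt_nonneg _
  have hq0 : 0 ≤ q := Real.sqrt_nonneg _
  have hs0 : 0 ≤ s := Real.sqrt_nonneg _
  have hu2 : u ^ 2 = t := Real.sq_sqrt ht
  have hv2 : v ^ 2 = b := Real.sq_sqrt hb0.le
  have hw2 : w ^ 2 = m := Real.sq_sqrt hm0.le
  have hp2 : p ^ 2 = E := Real.sq_sqrt hE
  have hq2 : q ^ 2 = F := Real.sq_sqrt hF
  have hus : u ≤ s := Real.sqrt_le_sqrt htrs
  have hwv : w ≤ v := Real.sqrt_le_sqrt (by linarith)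
  have huwv : u ^ 2 + w ^ 2 ≤ v ^ 2 := by rw [hu2, hw2, hv2]; exact hb
  have hEb : Real.sqrt (E / b) = p / v := Real.sqrt_div hE b
  have key : t * E * w + 2 * (p * u * q) * (v * w) ≤ 2 * s * (E + F) * v ^ 2 := by
    have h1 : 2 * (p * u * q) * (v * w) ≤ (p ^ 2 + q ^ 2) * (u * v * w) := by
      nlinarith [sq_nonneg (p - q), mul_nonneg (mul_nonneg hu0 hv0.le) hw0.le]
    have h2 : (p ^ 2 + q ^ 2) * (u * v * w) ≤ (p ^ 2 + q ^ 2) * (s * v * v) := by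
      gcongr (p ^ 2 + q ^ 2) * (?_ * v * ?_) <;>
        first
        | positivity
        | exact hus
        | exact hwv
    have h3 : u * w ≤ v ^ 2 / 2 := by nlinarith [sq_nonneg (u - w)]
    have h4 : t * E * w = (u * w) * (u * E) := by rw [← hu2, ← hp2]; ring
    have h5 : (u * w) * (u * E) ≤ (v ^ 2 / 2) * (s * E) := by
      have h6 : u * E ≤ s * E := mul_le_mul_of_nonneg_right hus hE
      have h7 : 0 ≤ u * E := mul_nonneg hu0 hE
      have h8 : 0 ≤ s * E := mul_nonneg hs0 hE
      calc (u * w) * (u * E) ≤ (v ^ 2 / 2) * (u * E) := mul_le_mul_of_nonneg_right h3 h7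
        _ ≤ (v ^ 2 / 2) * (s * E) := mul_le_mul_of_nonneg_left h6 (by positivity)
    have h9 : (p ^ 2 + q ^ 2) * (s * v * v) = s * (E + F) * v ^ 2 := by
      rw [hp2, hq2]; ring
    have h10 : 0 ≤ s * E * v ^ 2 := by positivity
    have h11 : 0 ≤ s * F * v ^ 2 := by positivity
    have h12 : t * E * w ≤ v ^ 2 / 2 * (s * E) := h4.trans_le h5
    have h13 : 2 * (p * u * q) * (v * w) ≤ s * (E + F) * v ^ 2 := (h1.trans h2).trans_eq h9
    linarith
  have hL : t * (E / b) + 2 * Real.sqrt (E / b) * (u * q)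
      = (t * E * w + 2 * (p * u * q) * (v * w)) / (v ^ 2 * w) := by
    rw [hEb, ← hv2]
    field_simp
  have hR : 2 * s / w * (E + F) = (2 * s * (E + F) * v ^ 2) / (v ^ 2 * w) := by
    field_simp
  rw [hL, hR]
  exact (div_le_div_iff_of_pos_right (by positivity)).mpr key

/-- Sparse-vector version of the tight hard-thresholding bound: keeping the `r`
largest-magnitude entries of `θ` (with `r > r*`) and zeroing the rest yields `θ'` with
`‖θ' − θ*‖₂² ≤ (1 + 2√(r*)/√(r − r*)) ‖θ − θ*‖₂²` for any `θ*` supported on at most `r*`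
coordinates. -/
theorem hard_thresholding_tight_bound {n r rs : ℕ} (hr : rs < r)
    (θ θs θ' : Fin n → ℝ)
    (S : Finset (Fin n)) (hScard : S.card = r)
    (hTop : ∀ i ∈ S, ∀ j ∉ S, |θ j| ≤ |θ i|)
    (hθ' : ∀ i, θ' i = if i ∈ S then θ i else 0)
    (T : Finset (Fin n)) (hTcard : T.card ≤ rs)
    (hsupp : ∀ i ∉ T, θs i = 0) :
    ∑ i, (θ' i - θs i) ^ 2 ≤
      (1 + 2 * Real.sqrt rs / Real.sqrt ((r : ℝ) - rs)) * ∑ i, (θ i - θs i) ^ 2 := by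
  classical
  set c : ℝ := 2 * Real.sqrt rs / Real.sqrt ((r : ℝ) - rs) with hc
  set X : ℝ := ∑ i, (θ i - θs i) ^ 2 with hX
  set A : Finset (Fin n) := T \ S with hA
  set B : Finset (Fin n) := S \ T with hB
  set E : ℝ := ∑ i ∈ B, (θ i - θs i) ^ 2 with hE
  set F : ℝ := ∑ i ∈ A, (θ i - θs i) ^ 2 with hF
  have hAS : ∀ i ∈ A, i ∉ S := fun i hi => (Finset.mem_sdiff.1 hi).2
  have hAT : ∀ i ∈ A, i ∈ T := fun i hi => (Finset.mem_sdiff.1 hi).1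
  have hBS : ∀ i ∈ B, i ∈ S := fun i hi => (Finset.mem_sdiff.1 hi).1
  have hBT : ∀ i ∈ B, i ∉ T := fun i hi => (Finset.mem_sdiff.1 hi).2
  have hASc : A ⊆ Sᶜ := fun i hi => Finset.mem_compl.2 (hAS i hi)
  -- cardinalities
  have hcB : B.card + (S ∩ T).card = S.card := Finset.card_sdiff_add_card_inter S T
  have hcA : A.card + (T ∩ S).card = T.card := Finset.card_sdiff_add_card_inter T S
  have hinter : (S ∩ T).card = (T ∩ S).card := by rw [Finset.inter_comm]
  have htA : A.card ≤ rs := by omega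
  have hbt : A.card + (r - rs) ≤ B.card := by omega
  have hb0 : 0 < B.card := by omega
  -- nonnegativity
  have hE0 : 0 ≤ E := Finset.sum_nonneg fun i _ => sq_nonneg _
  have hF0 : 0 ≤ F := Finset.sum_nonneg fun i _ => sq_nonneg _
  have hc0 : 0 ≤ c := by
    rw [hc]
    positivity
  -- E + F ≤ X
  have hdisj : Disjoint B A := by
    rw [Finset.disjoint_left]
    exact fun i hiB hiA => hAS i hiA (hBS i hiB)
  have hEFX : E + F ≤ X := by
    rw [hE, hF, ← Finset.sum_union hdisj, hX]
    exact Finset.sum_le_sum_of_subset_of_nonneg (Finset.subset_univ _)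
      fun i _ _ => sq_nonneg _
  -- entries of θ on A are dominated
  have hθa : ∀ i ∈ A, θ i ^ 2 ≤ E / B.card := by
    intro i hi
    rw [le_div_iff₀ (by exact_mod_cast hb0)]
    calc θ i ^ 2 * B.card = ∑ _j ∈ B, θ i ^ 2 := by
          rw [Finset.sum_const, nsmul_eq_mul]; ring
      _ ≤ ∑ j ∈ B, (θ j - θs j) ^ 2 := by
          refine Finset.sum_le_sum fun j hj => ?_
          rw [hsupp j (hBT j hj), sub_zero]
          have h1 : |θ i| ≤ |θ j| := hTop j (hBS j hj) i (hAS i hi)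
          calc θ i ^ 2 = |θ i| ^ 2 := (sq_abs _).symm
            _ ≤ |θ j| ^ 2 := by nlinarith [abs_nonneg (θ i)]
            _ = θ j ^ 2 := sq_abs _
      _ = E := rfl
  set a : ℝ := Real.sqrt (E / B.card) with ha
  have ha0 : 0 ≤ a := Real.sqrt_nonneg _
  have ha2 : a ^ 2 = E / B.card := Real.sq_sqrt (by positivity)
  have hθabs : ∀ i ∈ A, |θ i| ≤ a := by
    intro i hi
    rw [ha, ← Real.sqrt_sq_eq_abs]
    exact Real.sqrt_le_sqrt (hθa i hi)
  -- Cauchy-Schwarz on A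
  have hCS : ∑ i ∈ A, |θ i - θs i| ≤ Real.sqrt A.card * Real.sqrt F := by
    have h0 : 0 ≤ ∑ i ∈ A, |θ i - θs i| := Finset.sum_nonneg fun i _ => abs_nonneg _
    have hcs : (∑ i ∈ A, |θ i - θs i|) ^ 2 ≤ A.card * F := by
      have := sq_sum_le_card_mul_sum_sq (s := A) (f := fun i => |θ i - θs i|)
      simpa [sq_abs] using this
    calc ∑ i ∈ A, |θ i - θs i| = Real.sqrt ((∑ i ∈ A, |θ i - θs i|) ^ 2) :=
          (Real.sqrt_sq h0).symm
      _ ≤ Real.sqrt (A.card * F) := Real.sqrt_le_sqrt hcs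
      _ = Real.sqrt A.card * Real.sqrt F := Real.sqrt_mul (Nat.cast_nonneg _) _
  -- main bound on A
  have hAsum : ∑ i ∈ A, θs i ^ 2 ≤
      F + (A.card * (E / B.card) + 2 * a * ∑ i ∈ A, |θ i - θs i|) := by
    have hper : ∀ i ∈ A, θs i ^ 2 ≤
        (θ i - θs i) ^ 2 + E / B.card + 2 * a * |θ i - θs i| := by
      intro i hi
      have h1 : |θ i| ≤ a := hθabs i hi
      have h2 : θ i ^ 2 ≤ a ^ 2 := by nlinarith [abs_nonneg (θ i), sq_abs (θ i)]
      have h4 : -(θ i * (θ i - θs i)) ≤ |θ i| * |θ i - θs i| := by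
        rw [← abs_mul]
        exact neg_le_abs _
      have h5 : |θ i| * |θ i - θs i| ≤ a * |θ i - θs i| :=
        mul_le_mul_of_nonneg_right h1 (abs_nonneg _)
      rw [← ha2] at *
      nlinarith [h2, h4, h5]
    calc ∑ i ∈ A, θs i ^ 2
        ≤ ∑ i ∈ A, ((θ i - θs i) ^ 2 + E / B.card + 2 * a * |θ i - θs i|) :=
          Finset.sum_le_sum hper
      _ = F + (A.card * (E / B.card) + 2 * a * ∑ i ∈ A, |θ i - θs i|) := by
          rw [Finset.sum_add_distrib, Finset.sum_add_distrib, Finset.sum_const,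
            nsmul_eq_mul, ← Finset.mul_sum, hF]
          ring
  -- numeric step
  have hnum : (A.card : ℝ) * (E / B.card) +
      2 * Real.sqrt (E / B.card) * (Real.sqrt A.card * Real.sqrt F) ≤ c * (E + F) := by
    rw [hc]
    refine ht_aux (A.card : ℝ) (B.card : ℝ) ((r : ℝ) - rs) (rs : ℝ) E F
      (Nat.cast_nonneg _) (by exact_mod_cast htA) ?_ ?_ hE0 hF0
    · have : (rs : ℝ) + 1 ≤ r := by exact_mod_cast hr
      linarith
    · have h := hbt
      have h2 : ((A.card + (r - rs) : ℕ) : ℝ) ≤ (B.card : ℝ) := by exact_mod_cast h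
      rw [Nat.cast_add, Nat.cast_sub hr.le] at h2
      linarith
  have hAkey : ∑ i ∈ A, θs i ^ 2 ≤ F + c * X := by
    have h1 : 2 * a * ∑ i ∈ A, |θ i - θs i| ≤
        2 * Real.sqrt (E / B.card) * (Real.sqrt A.card * Real.sqrt F) := by
      rw [← ha]
      exact mul_le_mul_of_nonneg_left hCS (by positivity)
    have h2 : c * (E + F) ≤ c * X := mul_le_mul_of_nonneg_left hEFX hc0
    linarith
  -- sum decompositions
  have key1 : ∑ i, (θ' i - θs i) ^ 2
      = ∑ i ∈ S, (θ i - θs i) ^ 2 + ∑ i ∈ Sᶜ, θs i ^ 2 := by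
    rw [← Finset.sum_add_sum_compl S fun i => (θ' i - θs i) ^ 2]
    congr 1
    · exact Finset.sum_congr rfl fun i hi => by rw [hθ' i, if_pos hi]
    · refine Finset.sum_congr rfl fun i hi => ?_
      rw [hθ' i, if_neg (by simpa using hi)]
      ring
  have key2 : X = ∑ i ∈ S, (θ i - θs i) ^ 2 + ∑ i ∈ Sᶜ, (θ i - θs i) ^ 2 :=
    (Finset.sum_add_sum_compl S _).symm
  have key3 : ∑ i ∈ Sᶜ, θs i ^ 2 = ∑ i ∈ A, θs i ^ 2 := by
    refine (Finset.sum_subset hASc fun i hi hiA => ?_).symm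
    have hiT : i ∉ T := fun hiT => hiA (Finset.mem_sdiff.2 ⟨hiT, Finset.mem_compl.1 hi⟩)
    rw [hsupp i hiT]
    ring
  have key4 : F ≤ ∑ i ∈ Sᶜ, (θ i - θs i) ^ 2 :=
    Finset.sum_le_sum_of_subset_of_nonneg hASc fun i _ _ => sq_nonneg _
  calc ∑ i, (θ' i - θs i) ^ 2
      = ∑ i ∈ S, (θ i - θs i) ^ 2 + ∑ i ∈ A, θs i ^ 2 := by rw [key1, key3]
    _ ≤ ∑ i ∈ S, (θ i - θs i) ^ 2 + (F + c * X) := by linarith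
    _ ≤ ∑ i ∈ S, (θ i - θs i) ^ 2 + (∑ i ∈ Sᶜ, (θ i - θs i) ^ 2 + c * X) := by
        linarith
    _ = X + c * X := by rw [key2]; ring
    _ = (1 + c) * X := by ring
end

section
/- Suppose F : ℝ^{p×p} → ℝ satisfies restricted strong convexity and smoothness with constants m and M on rank-(2r+r*) matrices, let L, L* have rank at most r and r* respectively, let J be a subspace containing the column spaces of L and L*, and let η > 0. Then ‖L − L* − η·P_J(∇F(L) − ∇F(L*))‖²_F ≤ (1 + η²M² − 2ηm)‖L − L*‖²_F. -/
open Matrix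

/-- Frobenius norm of a square real matrix. -/
noncomputable def frob {p : ℕ} (A : Matrix (Fin p) (Fin p) ℝ) : ℝ :=
  Real.sqrt (∑ i, ∑ j, (A i j)^2)

lemma frob_sq {p : ℕ} (A : Matrix (Fin p) (Fin p) ℝ) :
    frob A ^ 2 = ∑ i, ∑ j, (A i j)^2 := by
  rw [frob, Real.sq_sqrt]
  positivity

lemma frob_nonneg {p : ℕ} (A : Matrix (Fin p) (Fin p) ℝ) : 0 ≤ frob A :=
  Real.sqrt_nonneg _

lemma trace_inner {p : ℕ} (A B : Matrix (Fin p) (Fin p) ℝ) :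
    trace (Aᵀ * B) = ∑ i, ∑ j, A i j * B i j := by
  simp [trace, Matrix.mul_apply, Matrix.diag, Matrix.transpose_apply]
  rw [Finset.sum_comm]

/-- Gradient-step contraction under restricted strong convexity/smoothness: if `F` has
gradient `gradF` satisfying the RSC/RSS inequalities with constants `m, M` on rank-
`(2r+r*)` matrices, `L` and `L*` have rank at most `r` and `r*`, and `P_J` is the
orthogonal projection onto a subspace `J` containing the column spaces of `L` and `L*`
(so it fixes both), then
`‖L − L* − η P_J(∇F(L) − ∇F(L*))‖²_F ≤ (1 + η²M² − 2ηm)‖L − L*‖²_F`. -/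
theorem rsc_rss_gradient_step_contraction {p r rs : ℕ}
    (F : Matrix (Fin p) (Fin p) ℝ → ℝ)
    (gradF : Matrix (Fin p) (Fin p) ℝ → Matrix (Fin p) (Fin p) ℝ)
    (m M η : ℝ) (hm : 0 < m) (hmM : m ≤ M) (hη : 0 < η)
    (L Ls : Matrix (Fin p) (Fin p) ℝ)
    (hL : L.rank ≤ r) (hLs : Ls.rank ≤ rs)
    (hrank : L.rank ≤ 2 * r + rs ∧ Ls.rank ≤ 2 * r + rs)
    (PJ : Matrix (Fin p) (Fin p) ℝ →ₗ[ℝ] Matrix (Fin p) (Fin p) ℝ)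
    (hidem : ∀ X, PJ (PJ X) = PJ X)
    (hsym : ∀ X Y, trace ((PJ X)ᵀ * Y) = trace (Xᵀ * PJ Y))
    (hfixL : PJ L = L) (hfixLs : PJ Ls = Ls)
    (hRSC : m * frob (L - Ls) ^ 2 ≤ trace ((PJ (gradF L - gradF Ls))ᵀ * (L - Ls)))
    (hRSS : frob (PJ (gradF L - gradF Ls)) ≤ M * frob (L - Ls)) :
    frob (L - Ls - η • PJ (gradF L - gradF Ls)) ^ 2 ≤
      (1 + η ^ 2 * M ^ 2 - 2 * η * m) * frob (L - Ls) ^ 2 := by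
  set D := L - Ls with hD
  set G := PJ (gradF L - gradF Ls) with hG
  have hexp : frob (D - η • G) ^ 2 =
      frob D ^ 2 - 2 * η * trace (Gᵀ * D) + η ^ 2 * frob G ^ 2 := by
    rw [frob_sq, frob_sq, frob_sq, trace_inner]
    simp only [Finset.mul_sum, ← Finset.sum_add_distrib, ← Finset.sum_sub_distrib]
    refine Finset.sum_congr rfl fun i _ => Finset.sum_congr rfl fun j _ => ?_
    simp only [Matrix.sub_apply, Matrix.smul_apply, smul_eq_mul]
    ring
  have hGsq : frob G ^ 2 ≤ M ^ 2 * frob D ^ 2 := by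
    have := pow_le_pow_left₀ (frob_nonneg G) hRSS 2
    calc frob G ^ 2 ≤ (M * frob D) ^ 2 := this
      _ = M ^ 2 * frob D ^ 2 := by ring
  have h1 : 2 * η * (m * frob D ^ 2) ≤ 2 * η * trace (Gᵀ * D) := by
    apply mul_le_mul_of_nonneg_left hRSC (by positivity)
  have h2 : η ^ 2 * frob G ^ 2 ≤ η ^ 2 * (M ^ 2 * frob D ^ 2) := by
    apply mul_le_mul_of_nonneg_left hGsq (by positivity)
  rw [hexp]
  nlinarith [h1, h2]
end

section
/- Fix 0 < m ≤ M and ε ∈ (0,1). If r ≥ (C/(1−ε))·(M/m)⁴·r* for a sufficiently large constant C, then ν := √(1 + (2/√(1−ε))·√(r*)/√(r−r*)) satisfies ν²·(1 − m²/M²) < 1; hence with η = m/M², the contraction factor ρ = ν·√(1 + M²η² − 2mη) = ν·√(1 − m²/M²) is strictly less than 1. -/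
/-- Rank-inflation makes the MAPLE contraction factor strictly less than one: there is a
universal constant `C` such that whenever `0 < m ≤ M`, `ε ∈ (0,1)` and
`r ≥ (C/(1−ε))(M/m)⁴ r*`, the factor `ν = √(1 + (2/√(1−ε))√(r*)/√(r−r*))` satisfies
`ν²(1 − m²/M²) < 1`; hence with `η = m/M²` the contraction factor
`ρ = ν√(1 + M²η² − 2mη)` is strictly less than `1`. -/
theorem rank_inflation_contraction :
    ∃ C : ℝ, 0 < C ∧ ∀ (m M ε : ℝ) (r rs : ℕ),
      0 < m → m ≤ M → 0 < ε → ε < 1 →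
      (C / (1 - ε)) * (M / m) ^ 4 * (rs : ℝ) ≤ (r : ℝ) →
      (Real.sqrt (1 + (2 / Real.sqrt (1 - ε)) * Real.sqrt rs /
            Real.sqrt ((r : ℝ) - rs))) ^ 2 * (1 - m ^ 2 / M ^ 2) < 1 ∧
      Real.sqrt (1 + (2 / Real.sqrt (1 - ε)) * Real.sqrt rs /
            Real.sqrt ((r : ℝ) - rs)) *
          Real.sqrt (1 + M ^ 2 * (m / M ^ 2) ^ 2 - 2 * m * (m / M ^ 2)) < 1 := by
  refine ⟨5, by norm_num, ?_⟩
  intro m M ε r rs hm hmM hε hε1 hr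
  have hM : 0 < M := lt_of_lt_of_le hm hmM
  set s : ℝ := 1 - ε with hsdef
  have hs : 0 < s := by simp [hsdef]; linarith
  set t : ℝ := m ^ 2 / M ^ 2 with htdef
  have ht0 : 0 < t := by positivity
  have ht1 : t ≤ 1 := by
    rw [htdef, div_le_one (by positivity)]
    exact pow_le_pow_left₀ hm.le hmM 2
  set a : ℝ := 2 / Real.sqrt s * Real.sqrt rs / Real.sqrt ((r : ℝ) - rs) with hadef
  have ha0 : 0 ≤ a := by positivity
  -- key step: a ≤ t
  have key : a ≤ t := by
    rcases Nat.eq_zero_or_pos rs with h0 | hpos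
    · simp [hadef, h0]
      exact ht0.le
    · have hrs1 : (1 : ℝ) ≤ (rs : ℝ) := by exact_mod_cast hpos
      have hinv : (M / m) ^ 4 * t ^ 2 = 1 := by
        rw [htdef]; field_simp
      have h5 : 5 * (rs : ℝ) ≤ s * t ^ 2 * r := by
        have := mul_le_mul_of_nonneg_right hr (by positivity : (0:ℝ) ≤ s * t ^ 2)
        calc (5 : ℝ) * rs = 5 / s * (M / m) ^ 4 * rs * (s * t ^ 2) := by
              have h' : 5 / s * (M / m) ^ 4 * rs * (s * t ^ 2)
                  = 5 * rs * ((M / m) ^ 4 * t ^ 2) * (s * s⁻¹) := by ring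
              rw [h', hinv, mul_inv_cancel₀ hs.ne', mul_one, mul_one]
          _ ≤ r * (s * t ^ 2) := this
          _ = s * t ^ 2 * r := by ring
      have hst1 : s * t ^ 2 ≤ 1 := by nlinarith
      have hkey : 4 * (rs : ℝ) ≤ t ^ 2 * (s * ((r : ℝ) - rs)) := by nlinarith
      have hdiff : (0 : ℝ) < (r : ℝ) - rs := by nlinarith
      have hsq : Real.sqrt (4 * rs) ≤ Real.sqrt (t ^ 2 * (s * ((r : ℝ) - rs))) :=
        Real.sqrt_le_sqrt hkey
      have hL : Real.sqrt (4 * (rs : ℝ)) = 2 * Real.sqrt rs := by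
        rw [show (4 : ℝ) * rs = 2 ^ 2 * rs by ring, Real.sqrt_mul (by positivity),
          Real.sqrt_sq (by norm_num : (0:ℝ) ≤ 2)]
      have hR : Real.sqrt (t ^ 2 * (s * ((r : ℝ) - rs)))
          = t * (Real.sqrt s * Real.sqrt ((r : ℝ) - rs)) := by
        rw [Real.sqrt_mul (by positivity), Real.sqrt_sq ht0.le,
          Real.sqrt_mul hs.le]
      rw [hL, hR] at hsq
      have hden : 0 < Real.sqrt s * Real.sqrt ((r : ℝ) - rs) := by
        apply mul_pos (Real.sqrt_pos.2 hs) (Real.sqrt_pos.2 hdiff)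
      rw [hadef, div_mul_eq_mul_div, div_div, div_le_iff₀ hden]
      linarith [hsq]
  have h1a : (0 : ℝ) ≤ 1 + a := by linarith
  have main : (1 + a) * (1 - t) < 1 := by nlinarith
  constructor
  · rw [Real.sq_sqrt h1a]
    exact main
  · have heq : 1 + M ^ 2 * (m / M ^ 2) ^ 2 - 2 * m * (m / M ^ 2) = 1 - t := by
      rw [htdef]; field_simp; ring
    rw [heq, ← Real.sqrt_mul h1a]
    have : Real.sqrt ((1 + a) * (1 - t)) < Real.sqrt 1 :=
      Real.sqrt_lt_sqrt (by nlinarith) (by linarith)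
    simpa using this
end
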